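/- Let r ≥ 2 and s ≥ 0 be integers. Define the sequence δ_0 = r/2 and δ_{j+1} = δ_j - δ_j/(1 + ∑_{i=1}^{j+1} r^i) for j ≥ 0. Then for all j ≥ 0, δ_j = (r/2) · (r^{j+1} - r^j)/(r^{j+1} - 1). -/

import Mathlib

/-- For `r ≥ 2`, the sequence `δ 0 = r/2`,
`δ (j+1) = δ j - δ j / (1 + ∑_{i=1}^{j+1} r^i)` has closed form
`δ j = (r/2) * (r^(j+1) - r^j) / (r^(j+1) - 1)`. -/
theorem delta_closed_form (r : ℕ) (hr : 2 ≤ r) (δ : ℕ → ℚ)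
    (h0 : δ 0 = (r : ℚ) / 2)
    (hrec : ∀ j, δ (j + 1) = δ j - δ j / (1 + ∑ i ∈ Finset.Icc 1 (j + 1), (r : ℚ) ^ i)) :
    ∀ j, δ j = ((r : ℚ) / 2) * ((r : ℚ) ^ (j + 1) - (r : ℚ) ^ j) / ((r : ℚ) ^ (j + 1) - 1) := by
  have hr1 : (1 : ℚ) < (r : ℚ) := by exact_mod_cast hr.trans_lt' one_lt_two
  have hrne : (r : ℚ) - 1 ≠ 0 := sub_ne_zero.mpr (ne_of_gt hr1)
  have hpow : ∀ k : ℕ, (r : ℚ) ^ (k + 1) - 1 ≠ 0 := fun k =>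
    sub_ne_zero.mpr (ne_of_gt (one_lt_pow₀ hr1 (Nat.succ_ne_zero k)))
  have hsum : ∀ j : ℕ, 1 + ∑ i ∈ Finset.Icc 1 (j + 1), (r : ℚ) ^ i
      = ((r : ℚ) ^ (j + 2) - 1) / ((r : ℚ) - 1) := by
    intro j
    have : 1 + ∑ i ∈ Finset.Icc 1 (j + 1), (r : ℚ) ^ i
        = ∑ i ∈ Finset.range (j + 2), (r : ℚ) ^ i := by
      rw [← Finset.Ico_add_one_right_eq_Icc, Finset.range_eq_Ico,
        Finset.sum_eq_sum_Ico_succ_bot (by omega : (0:ℕ) < j + 2)]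
      simp
      rfl
    rw [this, geom_sum_eq (ne_of_gt hr1)]
  intro j
  induction j with
  | zero => simp only [zero_add, pow_one, pow_zero]; rw [mul_div_assoc, div_self hrne, mul_one, h0]
  | succ j ih =>
    rw [hrec j, ih, hsum j]
    have h1 := hpow j
    have h2 := hpow (j + 1)
    field_simp
    ring
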